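/- Let (E,A,B) be an IDE system and let λ ∈ ℂ with det(λE−A) ≠ 0. Then for every u ∈ ℂ^m the stacked vector ((λE−A)⁻¹Bu ; u) ∈ ℂ^{n+m} belongs to the system space 𝒱 of (E,A,B); equivalently, the column space of the (n+m)×m matrix [(λE−A)⁻¹B ; I_m] is contained in 𝒱. -/
import Mathlib


open Matrix Filter
open scoped ComplexOrder

set_option synthInstance.maxHeartbeats 1000000
set_option maxHeartbeats 1000000

noncomputable section

/-- The behavior of the implicit difference equation `E x_{j+1} = A x_j + B u_j`. -/
def IsBehavior {n m : ℕ} (E A : Matrix (Fin n) (Fin n) ℂ) (B : Matrix (Fin n) (Fin m) ℂ)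
    (x : ℕ → Fin n → ℂ) (u : ℕ → Fin m → ℂ) : Prop :=
  ∀ j : ℕ, E *ᵥ x (j + 1) = A *ᵥ x j + B *ᵥ u j

/-- The system space: the smallest subspace of `ℂ^{n+m}` containing all stacked vectors
`(x_j ; u_j)` of behavior trajectories. -/
def systemSpace {n m : ℕ} (E A : Matrix (Fin n) (Fin n) ℂ) (B : Matrix (Fin n) (Fin m) ℂ) :
    Submodule ℂ (Fin n ⊕ Fin m → ℂ) :=
  Submodule.span ℂ {v : Fin n ⊕ Fin m → ℂ |
    ∃ x u, IsBehavior E A B x u ∧ ∃ j : ℕ, v = Sum.elim (x j) (u j)}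

/-- The pencil `zE - A` is regular: its determinant is not the zero polynomial. -/
def RegularPencil {n : ℕ} (E A : Matrix (Fin n) (Fin n) ℂ) : Prop :=
  ((Polynomial.X : Polynomial ℂ) • E.map ⇑(Polynomial.C (R := ℂ)) - A.map ⇑(Polynomial.C (R := ℂ))).det ≠ 0

/-- The KYP matrix `M(P)`. -/
def kypM {n m : ℕ} (E A : Matrix (Fin n) (Fin n) ℂ) (B : Matrix (Fin n) (Fin m) ℂ)
    (Q : Matrix (Fin n) (Fin n) ℂ) (S : Matrix (Fin n) (Fin m) ℂ)
    (R : Matrix (Fin m) (Fin m) ℂ) (P : Matrix (Fin n) (Fin n) ℂ) :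
    Matrix (Fin n ⊕ Fin m) (Fin n ⊕ Fin m) ℂ :=
  fromBlocks (Aᴴ * P * A - Eᴴ * P * E + Q) (Aᴴ * P * B + S)
    (Bᴴ * P * A + Sᴴ) (Bᴴ * P * B + R)

/-- The Popov function evaluated at a point `z ∈ ℂ` with `det (zE - A) ≠ 0`. -/
def popovEval {n m : ℕ} (E A : Matrix (Fin n) (Fin n) ℂ) (B : Matrix (Fin n) (Fin m) ℂ)
    (Q : Matrix (Fin n) (Fin n) ℂ) (S : Matrix (Fin n) (Fin m) ℂ)
    (R : Matrix (Fin m) (Fin m) ℂ) (z : ℂ) : Matrix (Fin m) (Fin m) ℂ :=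
  (fromRows ((z • E - A)⁻¹ * B) (1 : Matrix (Fin m) (Fin m) ℂ))ᴴ *
    fromBlocks Q S Sᴴ R * fromRows ((z • E - A)⁻¹ * B) 1

/-- Interpret a complex matrix as a matrix of rational functions. -/
def mapRat {a b : Type} (M : Matrix a b ℂ) : Matrix a b (RatFunc ℂ) :=
  M.map ⇑(algebraMap ℂ (RatFunc ℂ))

/-- The Popov function as an `m × m` matrix over the field `ℂ(z)`. -/
def popov {n m : ℕ} (E A : Matrix (Fin n) (Fin n) ℂ) (B : Matrix (Fin n) (Fin m) ℂ)
    (Q : Matrix (Fin n) (Fin n) ℂ) (S : Matrix (Fin n) (Fin m) ℂ)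
    (R : Matrix (Fin m) (Fin m) ℂ) : Matrix (Fin m) (Fin m) (RatFunc ℂ) :=
  mapRat Bᴴ * ((RatFunc.X : RatFunc ℂ)⁻¹ • mapRat Eᴴ - mapRat Aᴴ)⁻¹ * mapRat Q *
      ((RatFunc.X : RatFunc ℂ) • mapRat E - mapRat A)⁻¹ * mapRat B +
    mapRat Bᴴ * ((RatFunc.X : RatFunc ℂ)⁻¹ • mapRat Eᴴ - mapRat Aᴴ)⁻¹ * mapRat S +
    mapRat Sᴴ * ((RatFunc.X : RatFunc ℂ) • mapRat E - mapRat A)⁻¹ * mapRat B +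
    mapRat R

/-- A subspace `𝒴` is `N`-neutral if `x^* N y = 0` for all `x, y ∈ 𝒴`. -/
def IsNeutral {k : Type} [Fintype k] (N : Matrix k k ℂ) (Y : Submodule ℂ (k → ℂ)) : Prop :=
  ∀ x ∈ Y, ∀ y ∈ Y, star x ⬝ᵥ (N *ᵥ y) = 0

/-- A subspace is maximally `N`-neutral if it is `N`-neutral and no strictly larger
subspace is `N`-neutral. -/
def IsMaxNeutral {k : Type} [Fintype k] (N : Matrix k k ℂ) (Y : Submodule ℂ (k → ℂ)) : Prop :=
  IsNeutral N Y ∧ ∀ W : Submodule ℂ (k → ℂ), Y < W → ¬ IsNeutral N W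

/-- for `λ` with `det(λE − A) ≠ 0`, the stacked vector
`((λE−A)⁻¹ B u ; u)` belongs to the system space. -/
theorem stmt_1 {n m : ℕ} (E A : Matrix (Fin n) (Fin n) ℂ) (B : Matrix (Fin n) (Fin m) ℂ)
    (hreg : RegularPencil E A) (lam : ℂ) (hlam : (lam • E - A).det ≠ 0) :
    ∀ u : Fin m → ℂ,
      Sum.elim ((lam • E - A)⁻¹ *ᵥ (B *ᵥ u)) u ∈ systemSpace E A B := by
  intro u
  set x0 : Fin n → ℂ := (lam • E - A)⁻¹ *ᵥ (B *ᵥ u) with hx0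
  apply Submodule.subset_span
  refine ⟨fun j => lam ^ j • x0, fun j => lam ^ j • u, ?_, 0, by simp⟩
  intro j
  have key : (lam • E - A) *ᵥ x0 = B *ᵥ u := by
    rw [hx0, Matrix.mulVec_mulVec, Matrix.mul_nonsing_inv _ (isUnit_iff_ne_zero.mpr hlam), Matrix.one_mulVec]
  have key' : lam • (E *ᵥ x0) = A *ᵥ x0 + B *ᵥ u := by
    rw [← key, Matrix.sub_mulVec, Matrix.smul_mulVec]
    abel
  rw [Matrix.mulVec_smul, Matrix.mulVec_smul, Matrix.mulVec_smul, pow_succ, mul_comm,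
    mul_smul, smul_comm lam (lam ^ j), key', smul_add]
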